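/- arXiv:1003.4942 — 7 statements merged into one kernel-verified Lean document; each statement's English description precedes it below -/
import Mathlib

section
/- OPT_n = C + min over all functions F : {1, …, n} → ℝ of [ ∑_{i=1}^{n} (P_i − F_i)² + C · |{ i ∈ {1, …, n−1} : F_i ≠ F_{i+1} }| ]. In particular, the dynamic programming recurrence solves the piecewise-constant signal approximation problem up to an additive constant C. -/
noncomputable def objVal (P : ℕ → ℝ) (C : ℝ) (F : ℕ → ℝ) (i : ℕ) : ℝ :=
  ∑ k ∈ Finset.Icc 1 i, (P k - F k) ^ 2
    + C * (((Finset.Icc 1 (i - 1)).filter (fun k => F k ≠ F (k + 1))).card : ℝ)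

lemma seg_min (P : ℕ → ℝ) (j i : ℕ) (h : j < i) (c : ℝ) :
    ∑ k ∈ Finset.Icc (j+1) i, (P k - (∑ m ∈ Finset.Icc (j+1) i, P m) / ((i:ℝ) - j)) ^ 2
      ≤ ∑ k ∈ Finset.Icc (j+1) i, (P k - c) ^ 2 := by
  set T := ∑ m ∈ Finset.Icc (j+1) i, P m with hT
  have hN : (0:ℝ) < (i:ℝ) - j := by
    have : (j:ℝ) < i := by exact_mod_cast h
    linarith
  set μ := T / ((i:ℝ) - j) with hμ
  have hcard : ((Finset.Icc (j+1) i).card : ℝ) = (i:ℝ) - j := by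
    rw [Nat.card_Icc, show i + 1 - (j+1) = i - j from by omega, Nat.cast_sub h.le]
  have hTμ : T = μ * ((i:ℝ) - j) := by
    rw [hμ]; field_simp
  have key : ∑ k ∈ Finset.Icc (j+1) i, (P k - c) ^ 2
      - ∑ k ∈ Finset.Icc (j+1) i, (P k - μ) ^ 2 = ((i:ℝ) - j) * (μ - c)^2 := by
    rw [← Finset.sum_sub_distrib]
    have h1 : ∀ k ∈ Finset.Icc (j+1) i,
        (P k - c)^2 - (P k - μ)^2 = (μ - c) * (2 * P k) - (μ - c) * (c + μ) := by
      intro k _; ring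
    rw [Finset.sum_congr rfl h1, Finset.sum_sub_distrib, Finset.sum_const,
      ← Finset.mul_sum, ← Finset.mul_sum, nsmul_eq_mul, hcard, ← hT, hTμ]
    ring
  nlinarith [mul_nonneg hN.le (sq_nonneg (μ - c))]

lemma sum_split (g : ℕ → ℝ) (j i : ℕ) (h : j ≤ i) :
    ∑ k ∈ Finset.Icc 1 i, g k
      = ∑ k ∈ Finset.Icc 1 j, g k + ∑ k ∈ Finset.Icc (j+1) i, g k := by
  rw [show Finset.Icc 1 i = Finset.Ioc 0 i from (Finset.Icc_add_one_left_eq_Ioc 0 i),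
    show Finset.Icc 1 j = Finset.Ioc 0 j from (Finset.Icc_add_one_left_eq_Ioc 0 j),
    show Finset.Icc (j+1) i = Finset.Ioc j i from (Finset.Icc_add_one_left_eq_Ioc j i)]
  exact (Finset.sum_Ioc_consecutive g (Nat.zero_le j) h).symm

/-- `OPT n = C +` the minimum over all functions `F : {1,…,n} → ℝ` of
`∑_{i=1}^{n} (P i − F i)² + C · |{ i ∈ {1,…,n−1} : F i ≠ F (i+1) }|`, i.e. `OPT n − C`
is the least element of the set of achievable objective values. -/
theorem stmt1 (n : ℕ) (hn : 1 ≤ n) (P : ℕ → ℝ) (C : ℝ) (hC : 0 ≤ C)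
    (S : ℕ → ℝ) (hS : ∀ i, S i = ∑ m ∈ Finset.Icc 1 i, P m)
    (OPT : ℕ → ℝ) (hOPT0 : OPT 0 = 0)
    (hOPT : ∀ i, ∀ hi : 1 ≤ i, i ≤ n →
      OPT i = (Finset.range i).inf' (Finset.nonempty_range_iff.mpr (by omega))
        (fun j => OPT j
          + ∑ k ∈ Finset.Icc (j + 1) i, (P k - (S i - S j) / ((i : ℝ) - j)) ^ 2) + C) :
    IsLeast {v : ℝ | ∃ F : ℕ → ℝ,
        v = ∑ i ∈ Finset.Icc 1 n, (P i - F i) ^ 2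
          + C * (((Finset.Icc 1 (n - 1)).filter (fun i => F i ≠ F (i + 1))).card : ℝ)}
      (OPT n - C) := by
  have hSsum : ∀ j i : ℕ, j ≤ i → S i - S j = ∑ k ∈ Finset.Icc (j+1) i, P k := by
    intro j i h
    rw [hS, hS, sum_split P j i h]
    ring
  -- segment cost with mean
  have hseg : ∀ j i : ℕ, j < i → ∀ c : ℝ,
      ∑ k ∈ Finset.Icc (j+1) i, (P k - (S i - S j) / ((i:ℝ) - j)) ^ 2
        ≤ ∑ k ∈ Finset.Icc (j+1) i, (P k - c) ^ 2 := by
    intro j i h c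
    rw [hSsum j i h.le]
    exact seg_min P j i h c
  have main : ∀ i, 1 ≤ i → i ≤ n →
      (∀ F : ℕ → ℝ, OPT i - C ≤ objVal P C F i)
        ∧ (∃ F : ℕ → ℝ, objVal P C F i = OPT i - C) := by
    intro i
    induction i using Nat.strong_induction_on with
    | _ i ih =>
    intro hi1 hin
    have hne : (Finset.range i).Nonempty := Finset.nonempty_range_iff.mpr (by omega)
    have hrec := hOPT i hi1 hin
    have hinf_le : ∀ j ∈ Finset.range i,
        OPT i - C ≤ OPT j + ∑ k ∈ Finset.Icc (j+1) i, (P k - (S i - S j) / ((i:ℝ) - j)) ^ 2 := by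
      intro j hj
      rw [hrec]
      have h1 : (Finset.range i).inf' hne
          (fun j => OPT j + ∑ k ∈ Finset.Icc (j + 1) i, (P k - (S i - S j) / ((i : ℝ) - j)) ^ 2)
          ≤ OPT j + ∑ k ∈ Finset.Icc (j + 1) i, (P k - (S i - S j) / ((i : ℝ) - j)) ^ 2 :=
        Finset.inf'_le _ hj
      linarith
    have lower : ∀ F : ℕ → ℝ, OPT i - C ≤ objVal P C F i := by
      intro F
      set T := (Finset.range i).filter (fun j => j = 0 ∨ F j ≠ F (j+1)) with hTdef
      have hTne : T.Nonempty :=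
        ⟨0, Finset.mem_filter.mpr ⟨Finset.mem_range.mpr (by omega), Or.inl rfl⟩⟩
      set j := T.max' hTne with hjdef
      have hjmem := Finset.mem_filter.mp (T.max'_mem hTne)
      have hj_lt : j < i := Finset.mem_range.mp hjmem.1
      have hjT : j = 0 ∨ F j ≠ F (j+1) := hjmem.2
      have hmax : ∀ m, j < m → m < i → F m = F (m+1) := by
        intro m hm1 hm2
        by_contra hne'
        have hmT : m ∈ T :=
          Finset.mem_filter.mpr ⟨Finset.mem_range.mpr hm2, Or.inr hne'⟩
        have := Finset.le_max' T m hmT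
        omega
      have hconst : ∀ d k, i = k + d → j + 1 ≤ k → F k = F i := by
        intro d
        induction d with
        | zero => intro k hk _; rw [show k = i from by omega]
        | succ d ihd =>
          intro k hk hjk
          rw [hmax k (by omega) (by omega)]
          exact ihd (k+1) (by omega) (by omega)
      have hconst' : ∀ k, j + 1 ≤ k → k ≤ i → F k = F i := fun k h1 h2 =>
        hconst (i - k) k (by omega) h1
      have hsum2 : ∑ k ∈ Finset.Icc (j+1) i, (P k - F k) ^ 2
          = ∑ k ∈ Finset.Icc (j+1) i, (P k - F i) ^ 2 := by
        apply Finset.sum_congr rfl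
        intro k hk
        rw [Finset.mem_Icc] at hk
        rw [hconst' k hk.1 hk.2]
      have htail : ∑ k ∈ Finset.Icc (j+1) i, (P k - (S i - S j) / ((i:ℝ) - j)) ^ 2
          ≤ ∑ k ∈ Finset.Icc (j+1) i, (P k - F k) ^ 2 := by
        rw [hsum2]; exact hseg j i hj_lt (F i)
      rcases Nat.eq_zero_or_pos j with hj0 | hj1
      · -- j = 0 : no breakpoints at all
        have hbreak : (Finset.Icc 1 (i-1)).filter (fun k => F k ≠ F (k+1)) = ∅ := by
          rw [Finset.filter_eq_empty_iff]
          intro a ha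
          rw [Finset.mem_Icc] at ha
          simp only [ne_eq, not_not]
          exact hmax a (by omega) (by omega)
        have hobj : objVal P C F i = ∑ k ∈ Finset.Icc 1 i, (P k - F k) ^ 2 := by
          rw [objVal, hbreak]; simp
        have h0 := hinf_le 0 (Finset.mem_range.mpr (by omega))
        rw [hOPT0] at h0
        have : ∑ k ∈ Finset.Icc (0+1) i, (P k - F k) ^ 2
            = ∑ k ∈ Finset.Icc 1 i, (P k - F k) ^ 2 := by norm_num
        rw [hobj]
        rw [hj0] at htail
        linarith
      · -- j ≥ 1
        have hbreak : (Finset.Icc 1 (i-1)).filter (fun k => F k ≠ F (k+1))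
            = insert j ((Finset.Icc 1 (j-1)).filter (fun k => F k ≠ F (k+1))) := by
          ext a
          simp only [Finset.mem_insert, Finset.mem_filter, Finset.mem_Icc, ne_eq]
          constructor
          · rintro ⟨⟨h1a, hai⟩, hpa⟩
            rcases lt_trichotomy a j with h | h | h
            · exact Or.inr ⟨⟨h1a, by omega⟩, hpa⟩
            · exact Or.inl h
            · exact absurd (hmax a h (by omega)) hpa
          · rintro (rfl | ⟨⟨h1a, haj⟩, hpa⟩)
            · exact ⟨⟨by omega, by omega⟩, hjT.resolve_left (by omega)⟩
            · exact ⟨⟨h1a, by omega⟩, hpa⟩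
        have hjnot : j ∉ (Finset.Icc 1 (j-1)).filter (fun k => F k ≠ F (k+1)) := by
          simp only [Finset.mem_filter, Finset.mem_Icc]
          omega
        have hcard : (((Finset.Icc 1 (i-1)).filter (fun k => F k ≠ F (k+1))).card : ℝ)
            = (((Finset.Icc 1 (j-1)).filter (fun k => F k ≠ F (k+1))).card : ℝ) + 1 := by
          rw [hbreak, Finset.card_insert_of_notMem hjnot]
          push_cast; ring
        have hIH := (ih j hj_lt (by omega) (by omega)).1 F
        have hJle := hinf_le j (Finset.mem_range.mpr hj_lt)
        have hsplit := sum_split (fun k => (P k - F k) ^ 2) j i hj_lt.le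
        rw [objVal] at hIH ⊢
        rw [hsplit, hcard]
        linarith [htail]
    refine ⟨lower, ?_⟩
    obtain ⟨j, hjmem, hjeq⟩ := Finset.exists_mem_eq_inf' hne
      (fun j => OPT j + ∑ k ∈ Finset.Icc (j + 1) i, (P k - (S i - S j) / ((i : ℝ) - j)) ^ 2)
    have hj_lt : j < i := Finset.mem_range.mp hjmem
    have hval : OPT i - C = OPT j + ∑ k ∈ Finset.Icc (j+1) i, (P k - (S i - S j) / ((i:ℝ) - j)) ^ 2 := by
      rw [hrec, hjeq]; ring
    rcases Nat.eq_zero_or_pos j with rfl | hj1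
    · refine ⟨fun _ => (S i - S 0) / ((i:ℝ) - 0), ?_⟩
      have hbreak : (Finset.Icc 1 (i-1)).filter
          (fun k => (fun _ : ℕ => (S i - S 0) / ((i:ℝ) - 0)) k ≠ (fun _ : ℕ => (S i - S 0) / ((i:ℝ) - 0)) (k+1)) = ∅ := by
        simp
      rw [objVal, hbreak, hval, hOPT0]
      norm_num
    · obtain ⟨G, hG⟩ := (ih j hj_lt (by omega) (by omega)).2
      set μ := (S i - S j) / ((i:ℝ) - j) with hμ
      set F : ℕ → ℝ := fun k => if k ≤ j then G k else μ with hF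
      have hFeq : ∀ k, k ≤ j → F k = G k := fun k hk => by simp [hF, hk]
      have hFμ : ∀ k, j < k → F k = μ := fun k hk => by simp [hF, Nat.not_le.mpr hk]
      have hsum : ∑ k ∈ Finset.Icc 1 i, (P k - F k) ^ 2
          = ∑ k ∈ Finset.Icc 1 j, (P k - G k) ^ 2 + ∑ k ∈ Finset.Icc (j+1) i, (P k - μ) ^ 2 := by
        rw [sum_split (fun k => (P k - F k) ^ 2) j i hj_lt.le]
        congr 1
        · exact Finset.sum_congr rfl fun k hk => by
            rw [Finset.mem_Icc] at hk; rw [hFeq k hk.2]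
        · exact Finset.sum_congr rfl fun k hk => by
            rw [Finset.mem_Icc] at hk; rw [hFμ k (by omega)]
      have hsub : (Finset.Icc 1 (i-1)).filter (fun k => F k ≠ F (k+1))
          ⊆ insert j ((Finset.Icc 1 (j-1)).filter (fun k => G k ≠ G (k+1))) := by
        intro a ha
        simp only [Finset.mem_filter, Finset.mem_Icc, ne_eq] at ha
        obtain ⟨⟨h1a, hai⟩, hpa⟩ := ha
        simp only [Finset.mem_insert, Finset.mem_filter, Finset.mem_Icc, ne_eq]
        rcases lt_trichotomy a j with h | h | h
        · refine Or.inr ⟨⟨h1a, by omega⟩, ?_⟩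
          rw [hFeq a (by omega), hFeq (a+1) (by omega)] at hpa
          exact hpa
        · exact Or.inl h
        · rw [hFμ a h, hFμ (a+1) (by omega)] at hpa
          exact absurd rfl hpa
      have hcard : (((Finset.Icc 1 (i-1)).filter (fun k => F k ≠ F (k+1))).card : ℝ)
          ≤ (((Finset.Icc 1 (j-1)).filter (fun k => G k ≠ G (k+1))).card : ℝ) + 1 := by
        have h1 := Finset.card_le_card hsub
        have h2 := Finset.card_insert_le j ((Finset.Icc 1 (j-1)).filter (fun k => G k ≠ G (k+1)))
        have := le_trans h1 h2
        exact_mod_cast this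
      have hle : objVal P C F i ≤ OPT i - C := by
        rw [objVal] at hG ⊢
        rw [hsum, hval]
        nlinarith [mul_le_mul_of_nonneg_left hcard hC]
      exact ⟨F, le_antisymm hle (lower F)⟩
  obtain ⟨hlow, ⟨F, hF⟩⟩ := main n hn le_rfl
  constructor
  · exact ⟨F, hF.symm⟩
  · rintro v ⟨F', rfl⟩
    exact hlow F'
end

section
/- For all integers 0 ≤ j < i ≤ n, all real numbers x, and all real numbers D_j, the inequality x ≥ D_j − (S_i − S_j)²/(i − j) holds if and only if x·i + S_i² ≥ x·j + D_j·i + 2·S_i·S_j − S_j² − D_j·j. Consequently, deciding whether there exists j < i with x ≥ D_j − (S_i − S_j)²/(i − j) is equivalent to deciding whether the 4-dimensional halfspace { y ∈ ℝ⁴ : (x, i, S_i, −1)·y ≤ x·i + S_i² } contains one of the points (j, D_j, 2·S_j, S_j² + j·D_j). -/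
/-- For `0 ≤ j < i ≤ n`, `x ≥ D_j − (S i − S j)²/(i − j)` iff
`x·i + (S i)² ≥ x·j + D_j·i + 2·S i·S j − (S j)² − D_j·j`; consequently the decision problem
"∃ j < i with x ≥ D j − (S i − S j)²/(i − j)" is equivalent to the 4-dimensional halfspace
`{y : (x, i, S i, −1)·y ≤ x·i + (S i)²}` containing one of the points
`(j, D j, 2·S j, (S j)² + j·D j)`. -/
theorem stmt5 (n : ℕ) (hn : 1 ≤ n) (P : ℕ → ℝ)
    (S : ℕ → ℝ) (hS : ∀ i, S i = ∑ m ∈ Finset.Icc 1 i, P m)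
    (i : ℕ) (hin : i ≤ n) :
    (∀ j : ℕ, j < i → ∀ x Dj : ℝ,
      (x ≥ Dj - (S i - S j) ^ 2 / ((i : ℝ) - j) ↔
        x * i + (S i) ^ 2 ≥ x * j + Dj * i + 2 * S i * S j - (S j) ^ 2 - Dj * j)) ∧
    (∀ D : ℕ → ℝ, ∀ x : ℝ,
      ((∃ j : ℕ, j < i ∧ x ≥ D j - (S i - S j) ^ 2 / ((i : ℝ) - j)) ↔
        (∃ j : ℕ, j < i ∧
          dotProduct ![x, (i : ℝ), S i, -1]
            ![(j : ℝ), D j, 2 * S j, (S j) ^ 2 + (j : ℝ) * D j] ≤ x * i + (S i) ^ 2))) := by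
  have key : ∀ j : ℕ, j < i → ∀ x Dj : ℝ,
      (x ≥ Dj - (S i - S j) ^ 2 / ((i : ℝ) - j) ↔
        x * i + (S i) ^ 2 ≥ x * j + Dj * i + 2 * S i * S j - (S j) ^ 2 - Dj * j) := by
    intro j hj x Dj
    have hpos : (0 : ℝ) < (i : ℝ) - j := by
      have : (j : ℝ) < i := by exact_mod_cast hj
      linarith
    have hd : (S i - S j) ^ 2 / ((i : ℝ) - j) * ((i : ℝ) - j) = (S i - S j) ^ 2 :=
      div_mul_cancel₀ _ hpos.ne'
    constructor <;> intro h
    · nlinarith [h, hd]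
    · rw [ge_iff_le, sub_le_iff_le_add]
      rw [show x + (S i - S j) ^ 2 / ((i : ℝ) - j) =
        (x * ((i:ℝ)-j) + (S i - S j) ^ 2) / ((i:ℝ)-j) by field_simp]
      rw [le_div_iff₀ hpos]
      nlinarith [h]
  refine ⟨key, fun D x => ?_⟩
  constructor
  · rintro ⟨j, hj, h⟩
    refine ⟨j, hj, ?_⟩
    have := (key j hj x (D j)).mp h
    simp [dotProduct, Fin.sum_univ_four]
    nlinarith [this]
  · rintro ⟨j, hj, h⟩
    refine ⟨j, hj, (key j hj x (D j)).mpr ?_⟩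
    simp [dotProduct, Fin.sum_univ_four] at h
    nlinarith [h]
end

section
/- The function w' is Monge: for any integers 0 ≤ i₁ < i₂ < i₃ < i₄ ≤ n, w'(i₁, i₄) + w'(i₂, i₃) ≥ w'(i₁, i₃) + w'(i₂, i₄). -/
lemma block_sum (f : ℕ → ℝ) (j i : ℕ) (h : j ≤ i) :
    ∑ m ∈ Finset.Icc (j + 1) i, f m
      = (∑ m ∈ Finset.Icc 1 i, f m) - ∑ m ∈ Finset.Icc 1 j, f m := by
  have h0j : (0 : ℕ) ≤ j := Nat.zero_le j
  have key := Finset.sum_Ioc_consecutive f h0j h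
  rw [← Finset.Icc_add_one_left_eq_Ioc j i, ← Finset.Icc_add_one_left_eq_Ioc 0 j, ← Finset.Icc_add_one_left_eq_Ioc 0 i] at key
  simp only [Nat.succ_eq_add_one, zero_add] at key
  linarith

lemma block_cs (P : ℕ → ℝ) (j i : ℕ) (h : j ≤ i) :
    (∑ m ∈ Finset.Icc (j + 1) i, P m) ^ 2
      ≤ ((i : ℝ) - j) * ∑ m ∈ Finset.Icc (j + 1) i, (P m) ^ 2 := by
  have cs := sq_sum_le_card_mul_sum_sq (s := Finset.Icc (j+1) i) (f := P)
  have hcard : ((Finset.Icc (j+1) i).card : ℝ) = (i : ℝ) - j := by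
    rw [Nat.card_Icc]
    have : i + 1 - (j + 1) = i - j := by omega
    rw [this, Nat.cast_sub h]
  rw [hcard] at cs
  exact cs

/-- The function `w'` is Monge: for `0 ≤ i₁ < i₂ < i₃ < i₄ ≤ n`,
`w'(i₁,i₄) + w'(i₂,i₃) ≥ w'(i₁,i₃) + w'(i₂,i₄)`. -/
theorem stmt8 (n : ℕ) (hn : 1 ≤ n) (P : ℕ → ℝ)
    (S : ℕ → ℝ) (hS : ∀ i, S i = ∑ m ∈ Finset.Icc 1 i, P m)
    (w' : ℕ → ℕ → ℝ)
    (hw' : ∀ j i : ℕ, j < i → i ≤ n →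
      w' j i = ((i : ℝ) - j) * ∑ m ∈ Finset.Icc (j + 1) i, (P m) ^ 2 - (S i - S j) ^ 2)
    (i₁ i₂ i₃ i₄ : ℕ) (h12 : i₁ < i₂) (h23 : i₂ < i₃) (h34 : i₃ < i₄) (h4n : i₄ ≤ n) :
    w' i₁ i₃ + w' i₂ i₄ ≤ w' i₁ i₄ + w' i₂ i₃ := by
  set U : ℕ → ℝ := fun i => ∑ m ∈ Finset.Icc 1 i, (P m) ^ 2 with hU
  have hQ : ∀ j i : ℕ, j ≤ i → ∑ m ∈ Finset.Icc (j + 1) i, (P m) ^ 2 = U i - U j :=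
    fun j i h => block_sum (fun m => (P m) ^ 2) j i h
  have hSd : ∀ j i : ℕ, j ≤ i → S i - S j = ∑ m ∈ Finset.Icc (j + 1) i, P m := by
    intro j i h
    rw [hS, hS, block_sum P j i h]
  have hCS : ∀ j i : ℕ, j ≤ i → (S i - S j) ^ 2 ≤ ((i : ℝ) - j) * (U i - U j) := by
    intro j i h
    rw [hSd j i h, ← hQ j i h]
    exact block_cs P j i h
  have hUm : ∀ j i : ℕ, j ≤ i → U j ≤ U i := by
    intro j i h
    have := hQ j i h
    have hn0 : 0 ≤ ∑ m ∈ Finset.Icc (j + 1) i, (P m) ^ 2 :=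
      Finset.sum_nonneg fun m _ => sq_nonneg _
    linarith
  rw [hw' i₁ i₃ (h12.trans h23) (le_of_lt (h34.trans_le h4n)),
      hw' i₂ i₄ (h23.trans h34) h4n,
      hw' i₁ i₄ ((h12.trans h23).trans h34) h4n,
      hw' i₂ i₃ h23 (le_of_lt (h34.trans_le h4n)),
      hQ i₁ i₃ (le_of_lt (h12.trans h23)), hQ i₂ i₄ (le_of_lt (h23.trans h34)),
      hQ i₁ i₄ (le_of_lt ((h12.trans h23).trans h34)), hQ i₂ i₃ (le_of_lt h23)]
  have c12 : (i₁ : ℝ) < i₂ := by exact_mod_cast h12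
  have c23 : (i₂ : ℝ) < i₃ := by exact_mod_cast h23
  have c34 : (i₃ : ℝ) < i₄ := by exact_mod_cast h34
  have cs12 := hCS i₁ i₂ (le_of_lt h12)
  have cs34 := hCS i₃ i₄ (le_of_lt h34)
  have u12 := hUm i₁ i₂ (le_of_lt h12)
  have u34 := hUm i₃ i₄ (le_of_lt h34)
  set X : ℝ := ((i₄ : ℝ) - i₃) * (U i₂ - U i₁) with hX
  set Y : ℝ := ((i₂ : ℝ) - i₁) * (U i₄ - U i₃) with hY
  set u : ℝ := S i₂ - S i₁ with hu
  set v : ℝ := S i₄ - S i₃ with hv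
  have hX0 : 0 ≤ X := mul_nonneg (by linarith) (by linarith)
  have hY0 : 0 ≤ Y := mul_nonneg (by linarith) (by linarith)
  have hprod : u ^ 2 * v ^ 2 ≤ X * Y := by
    calc u ^ 2 * v ^ 2 ≤ (((i₂ : ℝ) - i₁) * (U i₂ - U i₁)) * (((i₄ : ℝ) - i₃) * (U i₄ - U i₃)) :=
          mul_le_mul cs12 cs34 (sq_nonneg _) (mul_nonneg (by linarith) (by linarith))
      _ = X * Y := by ring
  have key : 2 * (u * v) ≤ X + Y := by
    nlinarith [sq_nonneg (X - Y), sq_nonneg (X + Y - 2 * u * v), sq_nonneg (u * v)]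
  have expand : (↑i₄ - ↑i₁) * (U i₄ - U i₁) - (S i₄ - S i₁) ^ 2 +
      ((↑i₃ - ↑i₂) * (U i₃ - U i₂) - (S i₃ - S i₂) ^ 2) -
      ((↑i₃ - ↑i₁) * (U i₃ - U i₁) - (S i₃ - S i₁) ^ 2 +
       ((↑i₄ - ↑i₂) * (U i₄ - U i₂) - (S i₄ - S i₂) ^ 2)) = X + Y - 2 * (u * v) := by
    rw [hX, hY, hu, hv]; ring
  linarith [key, expand]
end

section
/- The truncated function w_k is Monge: for any integers 0 ≤ i₁ < i₂ < i₃ < i₄ ≤ n, w_k(i₁, i₄) + w_k(i₂, i₃) ≥ w_k(i₁, i₃) + w_k(i₂, i₄). -/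
private lemma amgm_core (s t u w : ℝ) (hs : 0 ≤ s) (ht : 0 ≤ t)
    (h : (u * w) ^ 2 ≤ s * t) : 2 * (u * w) ≤ s + t := by
  nlinarith [sq_nonneg (s - t), sq_nonneg (s + t), sq_nonneg (u * w), sq_nonneg (s + t - 2 * (u * w))]

private lemma cs_sum (P : ℕ → ℝ) (a b : ℕ) (h : a ≤ b) :
    (∑ m ∈ Finset.Ioc a b, P m) ^ 2 ≤ ((b : ℝ) - a) * ∑ m ∈ Finset.Ioc a b, (P m) ^ 2 := by
  have h1 := sq_sum_le_card_mul_sum_sq (s := Finset.Ioc a b) (f := P)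
  have hcard : ((Finset.Ioc a b).card : ℝ) = (b : ℝ) - a := by
    rw [Nat.card_Ioc]
    push_cast [Nat.cast_sub h]
    ring
  calc (∑ m ∈ Finset.Ioc a b, P m) ^ 2 ≤ ((Finset.Ioc a b).card : ℝ) * ∑ m ∈ Finset.Ioc a b, (P m) ^ 2 := h1
    _ = ((b : ℝ) - a) * ∑ m ∈ Finset.Ioc a b, (P m) ^ 2 := by rw [hcard]

private lemma pow_mul_le (M : ℝ) (hM : 0 ≤ M) {a b : ℕ} (h : a ≤ b) :
    (2:ℝ) ^ a * M ≤ 2 ^ b * M := by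
  apply mul_le_mul_of_nonneg_right _ hM
  exact pow_le_pow_right₀ one_le_two h

private lemma pow_mul_double (M : ℝ) (hM : 0 ≤ M) {a b : ℕ} (h : a + 1 ≤ b) :
    2 * ((2:ℝ) ^ a * M) ≤ 2 ^ b * M := by
  have : (2:ℝ) ^ (a+1) * M ≤ 2 ^ b * M := pow_mul_le M hM h
  rw [pow_succ] at this
  linarith

private lemma pow_conv (M : ℝ) (hM : 0 ≤ M) (p x y : ℕ) (hx : 1 ≤ x) (hy : 1 ≤ y) :
    (2:ℝ) ^ (p + x) * M + 2 ^ (p + y) * M ≤ 2 ^ (p + x + y) * M + 2 ^ p * M := by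
  have hx2 : (2:ℝ) ≤ 2 ^ x := by
    calc (2:ℝ) = 2 ^ 1 := (pow_one 2).symm
    _ ≤ 2 ^ x := pow_le_pow_right₀ one_le_two hx
  have hy2 : (2:ℝ) ≤ 2 ^ y := by
    calc (2:ℝ) = 2 ^ 1 := (pow_one 2).symm
    _ ≤ 2 ^ y := pow_le_pow_right₀ one_le_two hy
  have hp : (0:ℝ) ≤ 2 ^ p * M := by positivity
  have key : (2:ℝ) ^ x + 2 ^ y ≤ 2 ^ x * 2 ^ y + 1 := by nlinarith
  have := mul_le_mul_of_nonneg_left key hp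
  rw [pow_add, pow_add, pow_add, pow_add]
  nlinarith [this]

section Wfacts
variable (n : ℕ) (P S : ℕ → ℝ)
    (hS : ∀ i, S i = ∑ m ∈ Finset.Icc 1 i, P m)
    (w' : ℕ → ℕ → ℝ)
    (hw' : ∀ j i : ℕ, j < i → i ≤ n →
      w' j i = ((i : ℝ) - j) * ∑ m ∈ Finset.Icc (j + 1) i, (P m) ^ 2 - (S i - S j) ^ 2)

include hS hw'

private lemma w'_form : ∀ j i : ℕ, j < i → i ≤ n →
    w' j i = ((i : ℝ) - j) * (∑ m ∈ Finset.Ioc j i, (P m) ^ 2)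
      - (∑ m ∈ Finset.Ioc j i, P m) ^ 2 := by
  intro j i hji hin
  have hIoc : ∀ (a b : ℕ), Finset.Icc (a + 1) b = Finset.Ioc a b := fun a b => Finset.Icc_add_one_left_eq_Ioc a b
  have hSd : S i - S j = ∑ m ∈ Finset.Ioc j i, P m := by
    rw [hS, hS]
    rw [show Finset.Icc 1 i = Finset.Ioc 0 i from hIoc 0 i,
        show Finset.Icc 1 j = Finset.Ioc 0 j from hIoc 0 j]
    have := Finset.sum_Ioc_consecutive P (Nat.zero_le j) hji.le
    linarith
  rw [hw' j i hji hin, hIoc, hSd]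

private lemma w'_nonneg : ∀ j i : ℕ, j < i → i ≤ n → 0 ≤ w' j i := by
  intro j i hji hin
  rw [w'_form n P S hS w' hw' j i hji hin]
  have := cs_sum P j i hji.le
  linarith

private lemma w'_monge {A B C D : ℕ} (hAB : A < B) (hBC : B < C) (hCD : C < D) (hD : D ≤ n) :
    w' A C + w' B D ≤ w' A D + w' B C := by
  set u := ∑ m ∈ Finset.Ioc A B, P m with hu
  set v := ∑ m ∈ Finset.Ioc B C, P m with hv
  set w := ∑ m ∈ Finset.Ioc C D, P m with hw
  set q1 := ∑ m ∈ Finset.Ioc A B, (P m) ^ 2 with hq1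
  set q2 := ∑ m ∈ Finset.Ioc B C, (P m) ^ 2 with hq2
  set q3 := ∑ m ∈ Finset.Ioc C D, (P m) ^ 2 with hq3
  have eP_AC : ∑ m ∈ Finset.Ioc A C, P m = u + v :=
    (Finset.sum_Ioc_consecutive P hAB.le hBC.le).symm
  have eP_BD : ∑ m ∈ Finset.Ioc B D, P m = v + w :=
    (Finset.sum_Ioc_consecutive P hBC.le hCD.le).symm
  have eP_AD : ∑ m ∈ Finset.Ioc A D, P m = u + (v + w) := by
    rw [← Finset.sum_Ioc_consecutive P hAB.le (hBC.le.trans hCD.le), eP_BD]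
  have eQ_AC : ∑ m ∈ Finset.Ioc A C, (P m) ^ 2 = q1 + q2 :=
    (Finset.sum_Ioc_consecutive (fun m => (P m) ^ 2) hAB.le hBC.le).symm
  have eQ_BD : ∑ m ∈ Finset.Ioc B D, (P m) ^ 2 = q2 + q3 :=
    (Finset.sum_Ioc_consecutive (fun m => (P m) ^ 2) hBC.le hCD.le).symm
  have eQ_AD : ∑ m ∈ Finset.Ioc A D, (P m) ^ 2 = q1 + (q2 + q3) := by
    rw [← Finset.sum_Ioc_consecutive (fun m => (P m) ^ 2) hAB.le (hBC.le.trans hCD.le), eQ_BD]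
  have hcsu : u ^ 2 ≤ ((B : ℝ) - A) * q1 := cs_sum P A B hAB.le
  have hcsw : w ^ 2 ≤ ((D : ℝ) - C) * q3 := cs_sum P C D hCD.le
  have hq1n : 0 ≤ q1 := Finset.sum_nonneg fun m _ => sq_nonneg _
  have hq3n : 0 ≤ q3 := Finset.sum_nonneg fun m _ => sq_nonneg _
  have hl1 : (0:ℝ) ≤ (B : ℝ) - A := by
    have : (A:ℝ) ≤ B := by exact_mod_cast hAB.le
    linarith
  have hl3 : (0:ℝ) ≤ (D : ℝ) - C := by
    have : (C:ℝ) ≤ D := by exact_mod_cast hCD.le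
    linarith
  have key : 2 * (u * w) ≤ ((B : ℝ) - A) * q3 + ((D : ℝ) - C) * q1 := by
    apply amgm_core _ _ u w (by positivity) (by positivity)
    calc (u * w) ^ 2 = u ^ 2 * w ^ 2 := by ring
      _ ≤ (((B : ℝ) - A) * q1) * (((D : ℝ) - C) * q3) := by
          apply mul_le_mul hcsu hcsw (sq_nonneg w) (by positivity)
      _ = (((B : ℝ) - A) * q3) * (((D : ℝ) - C) * q1) := by ring
  have hBn : B ≤ n := le_of_lt (lt_of_lt_of_le (hBC.trans hCD) hD)
  have hCn : C ≤ n := le_of_lt (lt_of_lt_of_le hCD hD)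
  rw [w'_form n P S hS w' hw' A C (hAB.trans hBC) hCn,
      w'_form n P S hS w' hw' B D (hBC.trans hCD) hD,
      w'_form n P S hS w' hw' A D ((hAB.trans hBC).trans hCD) hD,
      w'_form n P S hS w' hw' B C hBC hCn,
      eP_AC, eP_BD, eP_AD, eQ_AC, eQ_BD, eQ_AD]
  nlinarith [key]

end Wfacts

set_option maxHeartbeats 1000000 in
/-- The truncated function `w_k` (equal to `w'(j,i)/c'` when
`c' ≤ i − j ≤ (1+ε)·c'` with `c' = (1+ε)^(k−1)`, and to exponentially large multiples of a
sufficiently large constant `M` outside that band) is Monge: for `0 ≤ i₁ < i₂ < i₃ < i₄ ≤ n`,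
`w_k(i₁,i₄) + w_k(i₂,i₃) ≥ w_k(i₁,i₃) + w_k(i₂,i₄)`. -/
theorem stmt9 (n : ℕ) (hn : 1 ≤ n) (P : ℕ → ℝ)
    (S : ℕ → ℝ) (hS : ∀ i, S i = ∑ m ∈ Finset.Icc 1 i, P m)
    (w' : ℕ → ℕ → ℝ)
    (hw' : ∀ j i : ℕ, j < i → i ≤ n →
      w' j i = ((i : ℝ) - j) * ∑ m ∈ Finset.Icc (j + 1) i, (P m) ^ 2 - (S i - S j) ^ 2)
    (ε : ℝ) (hε : 0 < ε) (k : ℕ) (hk : 1 ≤ k)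
    (c' : ℝ) (hc' : c' = (1 + ε) ^ (k - 1))
    (M : ℝ) (hMpos : 0 < M) (hM : ∀ j i : ℕ, j < i → i ≤ n → w' j i / c' ≤ M)
    (wk : ℕ → ℕ → ℝ)
    (hwk : ∀ j i : ℕ, j < i → i ≤ n →
      wk j i = if ((i : ℝ) - j) < c' then 2 ^ (n - i + j) * M
        else if (1 + ε) * c' < ((i : ℝ) - j) then 2 ^ (i - j) * M
        else w' j i / c')
    (i₁ i₂ i₃ i₄ : ℕ) (h12 : i₁ < i₂) (h23 : i₂ < i₃) (h34 : i₃ < i₄) (h4n : i₄ ≤ n) :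
    wk i₁ i₃ + wk i₂ i₄ ≤ wk i₁ i₄ + wk i₂ i₃ := by
  have hc'pos : 0 < c' := by rw [hc']; positivity
  have hMnn : (0:ℝ) ≤ M := hMpos.le
  have r12 : (i₁:ℝ) < i₂ := by exact_mod_cast h12
  have r23 : (i₂:ℝ) < i₃ := by exact_mod_cast h23
  have r34 : (i₃:ℝ) < i₄ := by exact_mod_cast h34
  have b13u : w' i₁ i₃ / c' ≤ M := hM _ _ (by omega) (by omega)
  have b24u : w' i₂ i₄ / c' ≤ M := hM _ _ (by omega) (by omega)
  have b14u : w' i₁ i₄ / c' ≤ M := hM _ _ (by omega) (by omega)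
  have b23u : w' i₂ i₃ / c' ≤ M := hM _ _ (by omega) (by omega)
  have b13l : 0 ≤ w' i₁ i₃ / c' :=
    div_nonneg (w'_nonneg n P S hS w' hw' _ _ (by omega) (by omega)) hc'pos.le
  have b24l : 0 ≤ w' i₂ i₄ / c' :=
    div_nonneg (w'_nonneg n P S hS w' hw' _ _ (by omega) (by omega)) hc'pos.le
  have b14l : 0 ≤ w' i₁ i₄ / c' :=
    div_nonneg (w'_nonneg n P S hS w' hw' _ _ (by omega) (by omega)) hc'pos.le
  have b23l : 0 ≤ w' i₂ i₃ / c' :=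
    div_nonneg (w'_nonneg n P S hS w' hw' _ _ (by omega) (by omega)) hc'pos.le
  have hmonge : w' i₁ i₃ + w' i₂ i₄ ≤ w' i₁ i₄ + w' i₂ i₃ :=
    w'_monge n P S hS w' hw' h12 h23 h34 h4n
  have hmongeDiv : w' i₁ i₃ / c' + w' i₂ i₄ / c' ≤ w' i₁ i₄ / c' + w' i₂ i₃ / c' := by
    rw [← add_div, ← add_div]
    exact div_le_div_of_nonneg_right hmonge hc'pos.le
  have hA : (4:ℝ) * M ≤ 2 ^ (n - i₃ + i₂) * M := by
    have h := pow_mul_le M hMnn (show 2 ≤ n - i₃ + i₂ by omega)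
    norm_num at h
    linarith
  have hB : (2:ℝ) * M ≤ 2 ^ (n - i₃ + i₁) * M := by
    have h := pow_mul_le M hMnn (show 1 ≤ n - i₃ + i₁ by omega)
    norm_num at h
    linarith
  have hC : M ≤ 2 ^ (n - i₄ + i₂) * M := by
    have h := pow_mul_le M hMnn (show 0 ≤ n - i₄ + i₂ by omega)
    norm_num at h
    linarith
  have hBA : 2 * ((2:ℝ) ^ (n - i₃ + i₁) * M) ≤ 2 ^ (n - i₃ + i₂) * M :=
    pow_mul_double M hMnn (by omega)
  have hCA : 2 * ((2:ℝ) ^ (n - i₄ + i₂) * M) ≤ 2 ^ (n - i₃ + i₂) * M :=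
    pow_mul_double M hMnn (by omega)
  have hDC : 2 * ((2:ℝ) ^ (n - i₄ + i₁) * M) ≤ 2 ^ (n - i₄ + i₂) * M :=
    pow_mul_double M hMnn (by omega)
  have hDB : 2 * ((2:ℝ) ^ (n - i₄ + i₁) * M) ≤ 2 ^ (n - i₃ + i₁) * M :=
    pow_mul_double M hMnn (by omega)
  have hSconv : 2 ^ (n - i₃ + i₁) * M + 2 ^ (n - i₄ + i₂) * M
      ≤ 2 ^ (n - i₃ + i₂) * M + 2 ^ (n - i₄ + i₁) * M := by
    have h1 : n - i₃ + i₁ = (n - i₄ + i₁) + (i₄ - i₃) := by omega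
    have h2 : n - i₄ + i₂ = (n - i₄ + i₁) + (i₂ - i₁) := by omega
    have h3 : n - i₃ + i₂ = (n - i₄ + i₁) + (i₄ - i₃) + (i₂ - i₁) := by omega
    rw [h1, h2, h3]
    exact pow_conv M hMnn _ _ _ (by omega) (by omega)
  have hLconv : 2 ^ (i₃ - i₁) * M + 2 ^ (i₄ - i₂) * M
      ≤ 2 ^ (i₄ - i₁) * M + 2 ^ (i₃ - i₂) * M := by
    have h1 : i₃ - i₁ = (i₃ - i₂) + (i₂ - i₁) := by omega
    have h2 : i₄ - i₂ = (i₃ - i₂) + (i₄ - i₃) := by omega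
    have h3 : i₄ - i₁ = (i₃ - i₂) + (i₂ - i₁) + (i₄ - i₃) := by omega
    rw [h1, h2, h3]
    exact pow_conv M hMnn _ _ _ (by omega) (by omega)
  have hLB : 2 * ((2:ℝ) ^ (i₃ - i₁) * M) ≤ 2 ^ (i₄ - i₁) * M :=
    pow_mul_double M hMnn (by omega)
  have hLC : 2 * ((2:ℝ) ^ (i₄ - i₂) * M) ≤ 2 ^ (i₄ - i₁) * M :=
    pow_mul_double M hMnn (by omega)
  have hLD : (4:ℝ) * M ≤ 2 ^ (i₄ - i₁) * M := by
    have h := pow_mul_le M hMnn (show 2 ≤ i₄ - i₁ by omega)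
    norm_num at h
    linarith
  have hLb : (2:ℝ) * M ≤ 2 ^ (i₃ - i₁) * M := by
    have h := pow_mul_le M hMnn (show 1 ≤ i₃ - i₁ by omega)
    norm_num at h
    linarith
  have hLc : (2:ℝ) * M ≤ 2 ^ (i₄ - i₂) * M := by
    have h := pow_mul_le M hMnn (show 1 ≤ i₄ - i₂ by omega)
    norm_num at h
    linarith
  have hLa : M ≤ 2 ^ (i₃ - i₂) * M := by
    have h := pow_mul_le M hMnn (show 0 ≤ i₃ - i₂ by omega)
    norm_num at h
    linarith
  rw [hwk i₁ i₃ (by omega) (by omega), hwk i₂ i₄ (by omega) (by omega),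
      hwk i₁ i₄ (by omega) (by omega), hwk i₂ i₃ (by omega) (by omega)]
  clear hw' hS hwk hM hmonge hc' hn hε hk
  split_ifs <;>
    linarith [hMpos, b13u, b24u, b14u, b23u, b13l, b24l, b14l, b23l, hmongeDiv,
      hA, hB, hC, hBA, hCA, hDC, hDB, hSconv, hLconv, hLB, hLC, hLD, hLb, hLc, hLa]
end

section
/- The weight function w(j, i) = ∑_{m=j+1}^{i} P_m² − (S_i − S_j)²/(i − j) + C does not in general have the Monge property: there exist a positive integer n, a signal P : {1, …, n} → ℝ, a constant C > 0, and indices 0 ≤ i₁ < i₂ < i₃ < i₄ ≤ n such that w(i₁, i₄) + w(i₂, i₃) < w(i₁, i₃) + w(i₂, i₄). -/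
/-- The weight function `w(j,i) = ∑_{m=j+1}^{i} (P m)² − (S i − S j)²/(i − j) + C`,
where `S i = ∑_{m=1}^{i} P m`. -/
noncomputable def mongeW (P : ℕ → ℝ) (C : ℝ) (j i : ℕ) : ℝ :=
  ∑ m ∈ Finset.Icc (j + 1) i, (P m) ^ 2
    - ((∑ m ∈ Finset.Icc 1 i, P m) - ∑ m ∈ Finset.Icc 1 j, P m) ^ 2 / ((i : ℝ) - j)
    + C

/-- The weight function `w` does not in general have the Monge property:
there exist `n ≥ 1`, a signal `P`, a constant `C > 0`, and indices
`0 ≤ i₁ < i₂ < i₃ < i₄ ≤ n` with `w(i₁,i₄) + w(i₂,i₃) < w(i₁,i₃) + w(i₂,i₄)`. -/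
theorem stmt13 : ∃ (n : ℕ) (P : ℕ → ℝ) (C : ℝ) (i₁ i₂ i₃ i₄ : ℕ),
    1 ≤ n ∧ 0 < C ∧ i₁ < i₂ ∧ i₂ < i₃ ∧ i₃ < i₄ ∧ i₄ ≤ n ∧
    mongeW P C i₁ i₄ + mongeW P C i₂ i₃ < mongeW P C i₁ i₃ + mongeW P C i₂ i₄ := by
  refine ⟨4, fun m => if m = 3 then 1 else 0, 1, 0, 1, 3, 4, ?_, ?_, ?_, ?_, ?_, ?_, ?_⟩
  · norm_num
  · norm_num
  · norm_num
  · norm_num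
  · norm_num
  · norm_num
  · have h1 : Finset.Icc 1 4 = ({1,2,3,4} : Finset ℕ) := by decide
    have h2 : Finset.Icc 1 3 = ({1,2,3} : Finset ℕ) := by decide
    have h3 : Finset.Icc 1 1 = ({1} : Finset ℕ) := by decide
    have h4 : Finset.Icc 1 0 = (∅ : Finset ℕ) := by decide
    have h5 : Finset.Icc 2 3 = ({2,3} : Finset ℕ) := by decide
    have h6 : Finset.Icc 2 4 = ({2,3,4} : Finset ℕ) := by decide
    have h7 : Finset.Icc 4 3 = (∅ : Finset ℕ) := by decide
    simp only [mongeW, h1, h2, h3, h4, h5, h6, h7]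
    norm_num
end

section
/- If |P_{i₁} − P_{i₂}| > 2·√(2C), then in any optimal solution of the piecewise-constant approximation problem, i₁ and i₂ lie in different segments: every F : {1, …, n} → ℝ minimizing ∑_{i=1}^{n} (P_i − F_i)² + C · |{ i ∈ {1, …, n−1} : F_i ≠ F_{i+1} }| satisfies F_m ≠ F_{m+1} for some m with i₁ ≤ m < i₂. -/
open Finset

/-- Key lemma: if a single point has squared error > 2C, F is not optimal. -/
lemma stmt15_key (n : ℕ) (P : ℕ → ℝ) (C : ℝ) (hC : 0 < C)
    (F : ℕ → ℝ) (j : ℕ) (hj1 : 1 ≤ j) (hjn : j ≤ n)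
    (hd : 2 * C < (P j - F j) ^ 2)
    (hopt : ∀ G : ℕ → ℝ,
      ∑ i ∈ Finset.Icc 1 n, (P i - F i) ^ 2
          + C * (((Finset.Icc 1 (n - 1)).filter (fun i => F i ≠ F (i + 1))).card : ℝ)
        ≤ ∑ i ∈ Finset.Icc 1 n, (P i - G i) ^ 2
          + C * (((Finset.Icc 1 (n - 1)).filter (fun i => G i ≠ G (i + 1))).card : ℝ)) :
    False := by
  classical
  set G : ℕ → ℝ := Function.update F j (P j) with hG
  have hjmem : j ∈ Finset.Icc 1 n := by simp [hj1, hjn]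
  have hsum : ∑ i ∈ Finset.Icc 1 n, (P i - G i) ^ 2
      = ∑ i ∈ Finset.Icc 1 n, (P i - F i) ^ 2 - (P j - F j) ^ 2 := by
    rw [← Finset.sum_erase_add _ _ hjmem, ← Finset.sum_erase_add _ (fun i => (P i - F i)^2) hjmem]
    have h1 : ∑ i ∈ (Finset.Icc 1 n).erase j, (P i - G i) ^ 2
        = ∑ i ∈ (Finset.Icc 1 n).erase j, (P i - F i) ^ 2 := by
      apply Finset.sum_congr rfl
      intro i hi
      have : i ≠ j := Finset.ne_of_mem_erase hi
      simp [hG, Function.update_of_ne this]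
    rw [h1]
    simp [hG]
  set A := (Finset.Icc 1 (n-1)).filter (fun i => F i ≠ F (i + 1)) with hA
  set B := (Finset.Icc 1 (n-1)).filter (fun i => G i ≠ G (i + 1)) with hB
  have hsub : B ⊆ A ∪ {j - 1, j} := by
    intro i hi
    simp only [hB, Finset.mem_filter] at hi
    by_cases h1 : i = j - 1
    · simp [h1]
    by_cases h2 : i = j
    · simp [h2]
    have hij : i ≠ j := h2
    have hij1 : i + 1 ≠ j := by
      intro h
      apply h1
      omega
    have : F i ≠ F (i + 1) := by
      have e1 : G i = F i := Function.update_of_ne hij _ _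
      have e2 : G (i + 1) = F (i + 1) := Function.update_of_ne hij1 _ _
      rw [e1, e2] at hi
      exact hi.2
    exact Finset.mem_union_left _ (Finset.mem_filter.mpr ⟨hi.1, this⟩)
  have hcard : (B.card : ℝ) ≤ (A.card : ℝ) + 2 := by
    have h1 : B.card ≤ A.card + 2 := by
      calc B.card ≤ (A ∪ {j - 1, j}).card := Finset.card_le_card hsub
        _ ≤ A.card + ({j - 1, j} : Finset ℕ).card := Finset.card_union_le _ _
        _ ≤ A.card + 2 := by
            have : ({j - 1, j} : Finset ℕ).card ≤ 2 := by
              apply le_trans (Finset.card_insert_le _ _); simp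
            omega
    exact_mod_cast h1
  have h := hopt G
  rw [hsum] at h
  nlinarith [h, hd, hC, hcard]

/-- If `|P i₁ − P i₂| > 2·√(2C)`, then in any optimal solution of the
piecewise-constant approximation problem, `i₁` and `i₂` lie in different segments: every
minimizer `F` of `∑_{i=1}^{n} (P i − F i)² + C·|{i ∈ {1,…,n−1} : F i ≠ F (i+1)}|` satisfies
`F m ≠ F (m+1)` for some `i₁ ≤ m < i₂`. -/
theorem stmt15 (n : ℕ) (hn : 1 ≤ n) (P : ℕ → ℝ) (C : ℝ) (hC : 0 < C)
    (i₁ i₂ : ℕ) (hi₁ : 1 ≤ i₁) (h12 : i₁ < i₂) (hi₂ : i₂ ≤ n)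
    (hfar : |P i₁ - P i₂| > 2 * Real.sqrt (2 * C))
    (F : ℕ → ℝ)
    (hopt : ∀ G : ℕ → ℝ,
      ∑ i ∈ Finset.Icc 1 n, (P i - F i) ^ 2
          + C * (((Finset.Icc 1 (n - 1)).filter (fun i => F i ≠ F (i + 1))).card : ℝ)
        ≤ ∑ i ∈ Finset.Icc 1 n, (P i - G i) ^ 2
          + C * (((Finset.Icc 1 (n - 1)).filter (fun i => G i ≠ G (i + 1))).card : ℝ)) :
    ∃ m : ℕ, i₁ ≤ m ∧ m < i₂ ∧ F m ≠ F (m + 1) := by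
  by_contra hcon
  push_neg at hcon
  -- F is constant on [i₁, i₂]
  have hconst : ∀ k, i₁ ≤ k → k ≤ i₂ → F k = F i₁ := by
    intro k
    induction k with
    | zero => intro h1 _; omega
    | succ m ih =>
      intro h1 h2
      rcases Nat.lt_or_ge i₁ (m + 1) with h | h
      · have hm1 : i₁ ≤ m := by omega
        have := hcon m hm1 (by omega)
        rw [← this]
        exact ih hm1 (by omega)
      · have : m + 1 = i₁ := by omega
        rw [this]
  have hFeq : F i₂ = F i₁ := hconst i₂ (le_of_lt h12) le_rfl
  -- one of the two errors exceeds √(2C)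
  have hs : Real.sqrt (2 * C) < max |P i₁ - F i₁| |P i₂ - F i₂| := by
    by_contra hle
    push_neg at hle
    have h1 : |P i₁ - F i₁| ≤ Real.sqrt (2 * C) := le_trans (le_max_left _ _) hle
    have h2 : |P i₂ - F i₂| ≤ Real.sqrt (2 * C) := le_trans (le_max_right _ _) hle
    have : |P i₁ - P i₂| ≤ |P i₁ - F i₁| + |P i₂ - F i₂| := by
      have e : P i₁ - P i₂ = (P i₁ - F i₁) - (P i₂ - F i₂) := by rw [hFeq]; ring
      rw [e]
      exact abs_sub _ _
    linarith
  have hsqC : Real.sqrt (2 * C) ^ 2 = 2 * C := Real.sq_sqrt (by linarith)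
  have hsqrt_nonneg : (0:ℝ) ≤ Real.sqrt (2 * C) := Real.sqrt_nonneg _
  rcases max_cases |P i₁ - F i₁| |P i₂ - F i₂| with ⟨hmax, _⟩ | ⟨hmax, _⟩
  · rw [hmax] at hs
    have hd : 2 * C < (P i₁ - F i₁) ^ 2 := by
      have := sq_lt_sq' (by linarith [abs_nonneg (P i₁ - F i₁), neg_abs_le (P i₁ - F i₁)]) hs
      nlinarith [sq_abs (P i₁ - F i₁)]
    exact stmt15_key n P C hC F i₁ hi₁ (by omega) hd hopt
  · rw [hmax] at hs
    have hd : 2 * C < (P i₂ - F i₂) ^ 2 := by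
      nlinarith [sq_abs (P i₂ - F i₂)]
    exact stmt15_key n P C hC F i₂ (by omega) hi₂ hd hopt
end

section
/- Splitting a segment that contains two far-apart points strictly decreases the cost: if a segmentation of {1, …, n} contains a segment [i, j] with i ≤ i₁ < i₂ ≤ j and |P_{i₁} − P_{i₂}| > 2·√(2C), where the cost of a segmentation is the sum over its segments [l, r] of min_{x ∈ ℝ} ∑_{m=l}^{r} (P_m − x)² plus C times the number of segments, then replacing [i, j] by the (at most five nonempty) segments [i, i₁−1], [i₁, i₁], [i₁+1, i₂−1], [i₂, i₂], [i₂+1, j] yields a segmentation of strictly smaller cost. -/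
/-- A list of segments `(l, r)` (closed intervals `[l, r]`) is a segmentation of `{1, …, n}`
if it is nonempty, starts at `1`, ends at `n`, every segment is nonempty (`l ≤ r`), and
consecutive segments are contiguous. -/
def IsSegmentation (n : ℕ) (L : List (ℕ × ℕ)) : Prop :=
  L ≠ [] ∧ (L.head?.map Prod.fst = some 1) ∧ (L.getLast?.map Prod.snd = some n) ∧
  (∀ p ∈ L, p.1 ≤ p.2) ∧ L.Chain' (fun p q => q.1 = p.2 + 1)

/-- The fitting cost of a segment `[l, r]`: `min_{x ∈ ℝ} ∑_{m=l}^{r} (P m − x)²`. -/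
noncomputable def segFitCost (P : ℕ → ℝ) (l r : ℕ) : ℝ :=
  ⨅ x : ℝ, ∑ m ∈ Finset.Icc l r, (P m - x) ^ 2

/-- The cost of a segmentation: the sum of the fitting costs of its segments plus `C` times
the number of segments. -/
noncomputable def segmentationCost (P : ℕ → ℝ) (C : ℝ) (L : List (ℕ × ℕ)) : ℝ :=
  (L.map (fun p => segFitCost P p.1 p.2)).sum + C * L.length

lemma fit_bdd (P : ℕ → ℝ) (l r : ℕ) :
    BddBelow (Set.range fun x : ℝ => ∑ m ∈ Finset.Icc l r, (P m - x) ^ 2) := by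
  refine ⟨0, ?_⟩
  rintro y ⟨x, rfl⟩
  exact Finset.sum_nonneg fun m _ => sq_nonneg _

lemma fit_nonneg (P : ℕ → ℝ) (l r : ℕ) : 0 ≤ segFitCost P l r :=
  le_ciInf fun x => Finset.sum_nonneg fun m _ => sq_nonneg _

lemma fit_le (P : ℕ → ℝ) (l r : ℕ) (x : ℝ) :
    segFitCost P l r ≤ ∑ m ∈ Finset.Icc l r, (P m - x) ^ 2 :=
  ciInf_le (fit_bdd P l r) x

lemma fit_singleton (P : ℕ → ℝ) (k : ℕ) : segFitCost P k k = 0 := by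
  refine le_antisymm ?_ (fit_nonneg P k k)
  have := fit_le P k k (P k)
  simpa using this

lemma fit_empty (P : ℕ → ℝ) {l r : ℕ} (h : r < l) : segFitCost P l r = 0 := by
  unfold segFitCost
  rw [Finset.Icc_eq_empty (by omega)]
  simp [ciInf_const]

lemma key_sum (g : ℕ → ℝ) (hg : ∀ m, 0 ≤ g m) {i i₁ i₂ j : ℕ}
    (h1 : 1 ≤ i) (hii₁ : i ≤ i₁) (h12 : i₁ < i₂) (hi₂j : i₂ ≤ j) :
    ∑ m ∈ Finset.Icc i (i₁-1), g m + g i₁ + ∑ m ∈ Finset.Icc (i₁+1) (i₂-1), g m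
      + g i₂ + ∑ m ∈ Finset.Icc (i₂+1) j, g m ≤ ∑ m ∈ Finset.Icc i j, g m := by
  have d1 : Disjoint (Finset.Icc i (i₁-1)) ({i₁} : Finset ℕ) := by
    rw [Finset.disjoint_left]; intro a ha hb; simp at ha hb; omega
  have d2 : Disjoint (Finset.Icc i (i₁-1) ∪ {i₁}) (Finset.Icc (i₁+1) (i₂-1)) := by
    rw [Finset.disjoint_left]; intro a ha hb; simp at ha hb; omega
  have d3 : Disjoint (Finset.Icc i (i₁-1) ∪ {i₁} ∪ Finset.Icc (i₁+1) (i₂-1)) ({i₂} : Finset ℕ) := by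
    rw [Finset.disjoint_left]; intro a ha hb; simp at ha hb; omega
  have d4 : Disjoint (Finset.Icc i (i₁-1) ∪ {i₁} ∪ Finset.Icc (i₁+1) (i₂-1) ∪ {i₂})
      (Finset.Icc (i₂+1) j) := by
    rw [Finset.disjoint_left]; intro a ha hb; simp at ha hb; omega
  have hsub : Finset.Icc i (i₁-1) ∪ {i₁} ∪ Finset.Icc (i₁+1) (i₂-1) ∪ {i₂} ∪ Finset.Icc (i₂+1) j
      ⊆ Finset.Icc i j := by
    intro a ha; simp at ha ⊢; omega
  calc ∑ m ∈ Finset.Icc i (i₁-1), g m + g i₁ + ∑ m ∈ Finset.Icc (i₁+1) (i₂-1), g m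
      + g i₂ + ∑ m ∈ Finset.Icc (i₂+1) j, g m
      = ∑ m ∈ (Finset.Icc i (i₁-1) ∪ {i₁} ∪ Finset.Icc (i₁+1) (i₂-1) ∪ {i₂}
          ∪ Finset.Icc (i₂+1) j), g m := by
        rw [Finset.sum_union d4, Finset.sum_union d3, Finset.sum_union d2, Finset.sum_union d1]
        simp
    _ ≤ ∑ m ∈ Finset.Icc i j, g m :=
        Finset.sum_le_sum_of_subset_of_nonneg hsub fun m _ _ => hg m

lemma key_fit (P : ℕ → ℝ) {i i₁ i₂ j : ℕ}
    (h1 : 1 ≤ i) (hii₁ : i ≤ i₁) (h12 : i₁ < i₂) (hi₂j : i₂ ≤ j) :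
    segFitCost P i (i₁-1) + segFitCost P (i₁+1) (i₂-1) + segFitCost P (i₂+1) j
      + (P i₁ - P i₂)^2 / 2 ≤ segFitCost P i j := by
  apply le_ciInf
  intro x
  have hs := key_sum (fun m => (P m - x)^2) (fun m => sq_nonneg _) h1 hii₁ h12 hi₂j
  have e1 := fit_le P i (i₁-1) x
  have e2 := fit_le P (i₁+1) (i₂-1) x
  have e3 := fit_le P (i₂+1) j x
  have hq : (P i₁ - P i₂)^2 / 2 ≤ (P i₁ - x)^2 + (P i₂ - x)^2 := by
    nlinarith [sq_nonneg (P i₁ + P i₂ - 2*x)]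
  linarith

lemma filter_map_sum {α : Type*} (f : α → ℝ) (p : α → Bool) :
    ∀ (L : List α), (∀ x ∈ L, p x = false → f x = 0) →
      ((L.filter p).map f).sum = (L.map f).sum := by
  intro L
  induction L with
  | nil => simp
  | cons a l ih =>
    intro h
    cases hp : p a with
    | true =>
      simp [List.filter_cons, hp]
      rw [ih fun x hx hfx => h x (List.mem_cons_of_mem a hx) hfx]
    | false =>
      simp [List.filter_cons, hp, h a List.mem_cons_self hp]
      rw [ih fun x hx hfx => h x (List.mem_cons_of_mem a hx) hfx]

lemma chain_fst_pos : ∀ (L : List (ℕ × ℕ)), L.Chain' (fun p q => q.1 = p.2 + 1) →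
    (∀ x ∈ L.head?, 1 ≤ x.1) → ∀ p ∈ L, 1 ≤ p.1 := by
  intro L
  induction L with
  | nil => simp
  | cons a l ih =>
    intro hc hh p hp
    rcases List.mem_cons.mp hp with rfl | hp'
    · exact hh p rfl
    · refine ih hc.tail ?_ p hp'
      intro x hx
      cases l with
      | nil => simp at hx
      | cons b t =>
        simp at hx
        subst hx
        have := (List.isChain_cons_cons.mp hc).1
        omega

lemma M_facts (i j i₁ i₂ : ℕ) (h1 : 1 ≤ i) (hii₁ : i ≤ i₁) (h12 : i₁ < i₂) (hi₂j : i₂ ≤ j) :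
    ([(i, i₁ - 1), (i₁, i₁), (i₁ + 1, i₂ - 1), (i₂, i₂), (i₂ + 1, j)].filter
        (fun p => p.1 ≤ p.2)) ≠ [] ∧
    (([(i, i₁ - 1), (i₁, i₁), (i₁ + 1, i₂ - 1), (i₂, i₂), (i₂ + 1, j)].filter
        (fun p => p.1 ≤ p.2)).head?.map Prod.fst = some i) ∧
    (([(i, i₁ - 1), (i₁, i₁), (i₁ + 1, i₂ - 1), (i₂, i₂), (i₂ + 1, j)].filter
        (fun p => p.1 ≤ p.2)).getLast?.map Prod.snd = some j) ∧
    ([(i, i₁ - 1), (i₁, i₁), (i₁ + 1, i₂ - 1), (i₂, i₂), (i₂ + 1, j)].filter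
        (fun p => p.1 ≤ p.2)).Chain' (fun p q => q.1 = p.2 + 1) := by
  by_cases c1 : i ≤ i₁ - 1 <;> by_cases c2 : i₁ + 1 ≤ i₂ - 1 <;> by_cases c3 : i₂ + 1 ≤ j <;>
    simp [List.filter_cons, c1, c2, c3, List.getLast?, List.Chain', List.isChain_cons_cons] <;> omega



/-- Splitting a segment containing two far-apart points strictly decreases the
cost: if a segmentation contains a segment `[i, j]` with `i ≤ i₁ < i₂ ≤ j` and
`|P i₁ − P i₂| > 2·√(2C)`, then replacing `[i, j]` by the (at most five nonempty) segments
`[i, i₁−1], [i₁, i₁], [i₁+1, i₂−1], [i₂, i₂], [i₂+1, j]` yields a segmentation of strictly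
smaller cost. -/
theorem stmt16 (n : ℕ) (hn : 1 ≤ n) (P : ℕ → ℝ) (C : ℝ) (hC : 0 < C)
    (L₁ L₂ : List (ℕ × ℕ)) (i j i₁ i₂ : ℕ)
    (hseg : IsSegmentation n (L₁ ++ [(i, j)] ++ L₂))
    (hii₁ : i ≤ i₁) (h12 : i₁ < i₂) (hi₂j : i₂ ≤ j)
    (hfar : |P i₁ - P i₂| > 2 * Real.sqrt (2 * C)) :
    IsSegmentation n
      (L₁ ++ ([(i, i₁ - 1), (i₁, i₁), (i₁ + 1, i₂ - 1), (i₂, i₂), (i₂ + 1, j)].filter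
        (fun p => p.1 ≤ p.2)) ++ L₂) ∧
    segmentationCost P C
        (L₁ ++ ([(i, i₁ - 1), (i₁, i₁), (i₁ + 1, i₂ - 1), (i₂, i₂), (i₂ + 1, j)].filter
          (fun p => p.1 ≤ p.2)) ++ L₂)
      < segmentationCost P C (L₁ ++ [(i, j)] ++ L₂) := by
  obtain ⟨h0, h1, h2, h3, h4⟩ := hseg
  set M := ([(i, i₁ - 1), (i₁, i₁), (i₁ + 1, i₂ - 1), (i₂, i₂), (i₂ + 1, j)].filter
        (fun p => p.1 ≤ p.2)) with hMdef
  -- 1 ≤ i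
  have hi1 : 1 ≤ i := by
    have hmem : ((i, j) : ℕ × ℕ) ∈ L₁ ++ [(i, j)] ++ L₂ := by simp
    refine chain_fst_pos _ h4 ?_ (i, j) hmem
    intro x hx
    obtain ⟨a, ha, hafst⟩ := Option.map_eq_some_iff.mp h1
    rw [ha] at hx
    simp only [Option.mem_def, Option.some.injEq] at hx
    subst hx
    omega
  obtain ⟨hMne, hMhead, hMlast, hMchain⟩ := M_facts i j i₁ i₂ hi1 hii₁ h12 hi₂j
  have hMall : ∀ p ∈ M, p.1 ≤ p.2 := by
    intro p hp
    rw [hMdef] at hp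
    exact of_decide_eq_true (List.mem_filter.mp hp).2
  obtain ⟨mh, hmh, hmhfst⟩ := Option.map_eq_some_iff.mp hMhead
  obtain ⟨ml, hml, hmlsnd⟩ := Option.map_eq_some_iff.mp hMlast
  -- decompose the chain of the original segmentation
  rw [List.Chain', List.isChain_append] at h4
  obtain ⟨h4l, h4r, hjunR⟩ := h4
  have hlast1 : (L₁ ++ [(i, j)]).getLast? = some (i, j) := by
    rw [List.getLast?_append_of_ne_nil _ (by simp)]
    rfl
  rw [hlast1] at hjunR
  rw [List.isChain_append] at h4l
  obtain ⟨hcL₁, -, hjunL⟩ := h4l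
  constructor
  · refine ⟨?_, ?_, ?_, ?_, ?_⟩
    · intro hc
      exact hMne (List.append_eq_nil_iff.mp (List.append_eq_nil_iff.mp hc).1).2
    · cases L₁ with
      | nil =>
        rw [List.nil_append] at h1 ⊢
        simp only [List.cons_append, List.nil_append, List.head?_cons,
          Option.map_some, Option.some.injEq] at h1
        rw [List.head?_append_of_ne_nil _ hMne, hmh]
        simp [hmhfst, h1]
      | cons a t =>
        simp only [List.cons_append, List.head?_cons] at h1 ⊢
        exact h1
    · cases L₂ with
      | nil =>
        rw [List.append_nil] at h2 ⊢
        rw [hlast1] at h2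
        simp only [Option.map_some, Option.some.injEq] at h2
        rw [List.getLast?_append_of_ne_nil _ hMne, hml]
        simp [hmlsnd, h2]
      | cons a t =>
        rw [List.getLast?_append_of_ne_nil _ (by simp : (a :: t) ≠ [])] at h2 ⊢
        exact h2
    · intro p hp
      simp only [List.mem_append] at hp
      rcases hp with (hp | hp) | hp
      · exact h3 p (by simp [hp])
      · exact hMall p hp
      · exact h3 p (by simp [hp])
    · simp only [List.Chain', List.isChain_append]
      refine ⟨⟨hcL₁, hMchain, ?_⟩, h4r, ?_⟩
      · intro x hx y hy
        rw [hmh] at hy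
        simp only [Option.mem_def, Option.some.injEq] at hy
        subst hy
        have := hjunL x hx (i, j) rfl
        omega
      · intro x hx y hy
        rw [List.getLast?_append_of_ne_nil _ hMne, hml] at hx
        simp only [Option.mem_def, Option.some.injEq] at hx
        subst hx
        have := hjunR (i, j) rfl y hy
        omega
  · -- cost comparison
    have hsum : (M.map (fun p => segFitCost P p.1 p.2)).sum
        = segFitCost P i (i₁ - 1) + segFitCost P (i₁ + 1) (i₂ - 1)
          + segFitCost P (i₂ + 1) j := by
      rw [hMdef, filter_map_sum]
      · simp [fit_singleton]
        ring
      · intro x hx hfx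
        simp only [decide_eq_false_iff_not, not_le] at hfx
        exact fit_empty P hfx
    have hlen : (M.length : ℝ) ≤ 5 := by
      have := List.length_filter_le (fun p : ℕ × ℕ => decide (p.1 ≤ p.2))
        [(i, i₁ - 1), (i₁, i₁), (i₁ + 1, i₂ - 1), (i₂, i₂), (i₂ + 1, j)]
      rw [← hMdef] at this
      exact_mod_cast le_trans this (by norm_num)
    have hkey := key_fit P hi1 hii₁ h12 hi₂j
    have hd : 8 * C < (P i₁ - P i₂) ^ 2 := by
      have h0' : (0 : ℝ) ≤ 2 * Real.sqrt (2 * C) := by positivity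
      have hsq : (2 * Real.sqrt (2 * C)) ^ 2 < |P i₁ - P i₂| ^ 2 :=
        pow_lt_pow_left₀ hfar h0' (by norm_num)
      rw [sq_abs] at hsq
      have : (2 * Real.sqrt (2 * C)) ^ 2 = 8 * C := by
        rw [mul_pow, Real.sq_sqrt (by linarith)]
        ring
      linarith
    simp only [segmentationCost, List.map_append, List.sum_append, List.length_append,
      List.map_cons, List.map_nil, List.sum_cons, List.sum_nil, List.length_cons,
      List.length_nil, Nat.cast_add]
    have hClen : C * (M.length : ℝ) ≤ C * 5 := mul_le_mul_of_nonneg_left hlen hC.le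
    push_cast
    rw [hsum]
    nlinarith [hkey, hd, hClen]
end
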